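/- Let λ : ℕ → ℝ satisfy λ i ≥ 1 for all i, and let s be a real number with s > 0 such that the family ((λ i)^{−s})_{i ∈ ℕ} is summable. Then for every t > 0 the family (exp(−t · λ i))_i is summable, the function t ↦ t^{s−1} · ∑'_i exp(−t · λ i) is integrable on (0, ∞), and ∫₀^∞ t^{s−1} (∑'_i exp(−t · λ i)) dt = Γ(s) · ∑'_i (λ i)^{−s}. -/

import Mathlib

open MeasureTheory

/-- Mellin transform relation between the theta function `θ(t) = ∑ᵢ e^{−tλᵢ}` and the
zeta function `ζ(s) = ∑ᵢ λᵢ^{−s}`: `∫₀^∞ t^{s−1} θ(t) dt = Γ(s) ζ(s)`. -/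
theorem theta_mellin_eq_gamma_mul_zeta
    (lam : ℕ → ℝ) (hlam : ∀ i, 1 ≤ lam i) (s : ℝ) (hs : 0 < s)
    (hsum : Summable fun i => (lam i) ^ (-s)) :
    (∀ t : ℝ, 0 < t → Summable fun i => Real.exp (-(t * lam i))) ∧
    IntegrableOn (fun t : ℝ => t ^ (s - 1) * ∑' i, Real.exp (-(t * lam i))) (Set.Ioi 0) ∧
    (∫ t in Set.Ioi (0 : ℝ), t ^ (s - 1) * ∑' i, Real.exp (-(t * lam i)))
      = Real.Gamma s * ∑' i, (lam i) ^ (-s) := by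
  have hlam0 : ∀ i, (0:ℝ) < lam i := fun i => lt_of_lt_of_le one_pos (hlam i)
  set f : ℕ → ℝ → ℝ := fun i t => t ^ (s - 1) * Real.exp (-(t * lam i)) with hfdef
  -- Part 1: summability of the theta series
  have hsummableExp : ∀ t : ℝ, 0 < t → Summable fun i => Real.exp (-(t * lam i)) := by
    intro t ht
    set n := ⌈s⌉₊ with hn
    refine Summable.of_nonneg_of_le (fun i => (Real.exp_nonneg _))
      (fun i => ?_) (hsum.mul_left ((n.factorial : ℝ) / t ^ n))
    have hx : (0:ℝ) < t * lam i := mul_pos ht (hlam0 i)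
    have h1 : ((t * lam i) ^ n / n.factorial : ℝ) ≤ Real.exp (t * lam i) :=
      Real.pow_div_factorial_le_exp _ hx.le n
    have h3 : Real.exp (-(t * lam i)) ≤ (n.factorial : ℝ) / (t * lam i) ^ n := by
      rw [Real.exp_neg, inv_le_comm₀ (Real.exp_pos _) (by positivity), inv_div]
      exact h1
    have h2 : (lam i) ^ (-(n:ℝ)) ≤ (lam i) ^ (-s) :=
      Real.rpow_le_rpow_of_exponent_le (hlam i) (neg_le_neg (Nat.le_ceil s))
    calc Real.exp (-(t * lam i)) ≤ (n.factorial : ℝ) / (t * lam i) ^ n := h3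
      _ = (n.factorial : ℝ) / t ^ n * (lam i) ^ (-(n:ℝ)) := by
          rw [Real.rpow_neg (hlam0 i).le, Real.rpow_natCast, mul_pow]
          field_simp
      _ ≤ (n.factorial : ℝ) / t ^ n * (lam i) ^ (-s) := by
          apply mul_le_mul_of_nonneg_left h2 (by positivity)
  -- measurability of each term
  have hfmeas : ∀ i, Measurable (f i) := by
    intro i
    rw [hfdef]
    fun_prop
  -- each term is integrable on (0, ∞)
  have hfi : ∀ i, IntegrableOn (f i) (Set.Ioi 0) := by
    intro i
    refine (Real.GammaIntegral_convergent hs).mono' (hfmeas i).aestronglyMeasurable ?_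
    filter_upwards [ae_restrict_mem measurableSet_Ioi] with t ht
    have ht' : (0:ℝ) < t := ht
    rw [Real.norm_eq_abs, abs_of_nonneg (by positivity)]
    show t ^ (s - 1) * Real.exp (-(t * lam i)) ≤ Real.exp (-t) * t ^ (s - 1)
    rw [mul_comm (Real.exp (-t))]
    apply mul_le_mul_of_nonneg_left _ (Real.rpow_nonneg ht'.le _)
    exact Real.exp_le_exp.mpr (neg_le_neg (le_mul_of_one_le_right ht'.le (hlam i)))
  -- value of each term's integral
  have hint : ∀ i, ∫ t in Set.Ioi (0:ℝ), f i t = (lam i) ^ (-s) * Real.Gamma s := by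
    intro i
    have h := Real.integral_rpow_mul_exp_neg_mul_Ioi hs (hlam0 i)
    simp_rw [mul_comm (lam i)] at h
    rw [hfdef]
    simp only []
    rw [h, one_div, Real.inv_rpow (hlam0 i).le, ← Real.rpow_neg (hlam0 i).le]
  have hnonneg : ∀ (i : ℕ) (t : ℝ), 0 < t → 0 ≤ f i t := by
    intro i t ht
    show 0 ≤ t ^ (s - 1) * Real.exp (-(t * lam i))
    positivity
  -- lintegral of each term
  have hlint : ∀ i, ∫⁻ t in Set.Ioi (0:ℝ), ENNReal.ofReal (f i t)
      = ENNReal.ofReal ((lam i) ^ (-s) * Real.Gamma s) := by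
    intro i
    rw [← MeasureTheory.ofReal_integral_eq_lintegral_ofReal (hfi i) ?_, hint i]
    filter_upwards [ae_restrict_mem measurableSet_Ioi] with t ht
    exact hnonneg i t ht
  -- the key finiteness
  have hkey : ∑' i, ∫⁻ t in Set.Ioi (0:ℝ), ENNReal.ofReal (f i t)
      = ENNReal.ofReal (Real.Gamma s * ∑' i, (lam i) ^ (-s)) := by
    simp_rw [hlint]
    rw [← ENNReal.ofReal_tsum_of_nonneg
      (fun i => mul_nonneg (Real.rpow_nonneg (hlam0 i).le _) (Real.Gamma_pos_of_pos hs).le)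
      (hsum.mul_right _)]
    rw [tsum_mul_right, mul_comm]
  -- ennnorm vs ofReal
  have hnn : ∀ i, (∫⁻ t in Set.Ioi (0:ℝ), (‖f i t‖₊ : ENNReal))
      = ∫⁻ t in Set.Ioi (0:ℝ), ENNReal.ofReal (f i t) := by
    intro i
    refine lintegral_congr_ae ?_
    filter_upwards [ae_restrict_mem measurableSet_Ioi] with t ht
    exact Real.enorm_eq_ofReal (hnonneg i t ht)
  -- identify the theta integrand with the pointwise tsum of the f i
  have hg_eq : (fun t : ℝ => t ^ (s - 1) * ∑' i, Real.exp (-(t * lam i)))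
      = fun t : ℝ => ∑' i, f i t := by
    funext t
    rw [hfdef]
    exact (tsum_mul_left).symm
  -- integrability of the theta integrand
  have hmain_int : IntegrableOn (fun t : ℝ => t ^ (s - 1) * ∑' i, Real.exp (-(t * lam i)))
      (Set.Ioi 0) := by
    rw [hg_eq]
    have hmeasG : AEStronglyMeasurable (fun t : ℝ => ∑' i, f i t)
        (volume.restrict (Set.Ioi 0)) := by
      have hM : Measurable fun t : ℝ => (∑' i, ENNReal.ofReal (f i t)).toReal :=
        (Measurable.ennreal_tsum fun i => (hfmeas i).ennreal_ofReal).ennreal_toReal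
      refine (hM.aestronglyMeasurable).congr ?_
      filter_upwards [ae_restrict_mem measurableSet_Ioi] with t ht
      have hsumm : Summable fun i => f i t := (hsummableExp t ht).mul_left _
      rw [← ENNReal.ofReal_tsum_of_nonneg (fun i => hnonneg i t ht) hsumm,
        ENNReal.toReal_ofReal (tsum_nonneg fun i => hnonneg i t ht)]
    refine ⟨hmeasG, ?_⟩
    have hnn' : 0 ≤ᵐ[volume.restrict (Set.Ioi (0:ℝ))] fun t : ℝ => ∑' i, f i t := by
      filter_upwards [ae_restrict_mem measurableSet_Ioi] with t ht
      exact tsum_nonneg fun i => hnonneg i t ht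
    rw [hasFiniteIntegral_iff_ofReal hnn']
    have heq : (∫⁻ t in Set.Ioi (0:ℝ), ENNReal.ofReal (∑' i, f i t))
        = ∑' i, ∫⁻ t in Set.Ioi (0:ℝ), ENNReal.ofReal (f i t) := by
      rw [← MeasureTheory.lintegral_tsum
        (fun i => ((hfmeas i).ennreal_ofReal).aemeasurable)]
      refine lintegral_congr_ae ?_
      filter_upwards [ae_restrict_mem measurableSet_Ioi] with t ht
      rw [← ENNReal.ofReal_tsum_of_nonneg (fun i => hnonneg i t ht)
        ((hsummableExp t ht).mul_left _)]
    rw [heq, hkey]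
    exact ENNReal.ofReal_lt_top
  refine ⟨hsummableExp, hmain_int, ?_⟩
  rw [show (∫ t in Set.Ioi (0:ℝ), t ^ (s - 1) * ∑' i, Real.exp (-(t * lam i)))
      = ∫ t in Set.Ioi (0:ℝ), ∑' i, f i t by rw [hg_eq]]
  rw [MeasureTheory.integral_tsum (fun i => (hfmeas i).aestronglyMeasurable) ?_]
  · simp_rw [hint]
    rw [tsum_mul_right, mul_comm]
  · simp_rw [enorm_eq_nnnorm, hnn]
    rw [hkey]
    exact ENNReal.ofReal_ne_top
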